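/- arXiv:2211.16998 — 2 statements merged into one kernel-verified Lean document; each statement's English description precedes it below -/
import Mathlib

section
/- The operators A_𝐢 = Σ_{p∈P_𝐢} p, indexed by 4-tuples 𝐢 = (i₁,i_x,i_y,i_z) summing to n, are linearly independent and span the commutant of the permutation representation R(S_n) inside the algebra of operators on (ℂ²)^⊗n; hence the algebra of S_n-invariant operators on n qubits has dimension C(n+3,3). -/
open Matrix

noncomputable section

/-- The Pauli matrices `σ₁ = I, σx, σy, σz`, indexed by `0,1,2,3`. -/
def pauli : Fin 4 → Matrix (Fin 2) (Fin 2) ℂ :=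
  ![1, !![0, 1; 1, 0], !![0, -Complex.I; Complex.I, 0], !![1, 0; 0, -1]]

/-- The matrix, in the computational basis of `(ℂ²)^⊗n`, of the representation
of `Sₙ` permuting tensor factors. -/
def Rmat (n : ℕ) (π : Equiv.Perm (Fin n)) :
    Matrix (Fin n → Fin 2) (Fin n → Fin 2) ℂ :=
  Matrix.of fun s t => if t = s ∘ π then 1 else 0

/-- The Pauli word `σ_{p 1} ⊗ ⋯ ⊗ σ_{p n}` as a matrix on `(ℂ²)^⊗n`. -/
def pauliWord (n : ℕ) (p : Fin n → Fin 4) :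
    Matrix (Fin n → Fin 2) (Fin n → Fin 2) ℂ :=
  Matrix.of fun s t => ∏ i, pauli (p i) (s i) (t i)

/-- The symmetrized Pauli operator `A_𝐢 = ∑_{p ∈ P_𝐢} p`, the sum of all Pauli
words of type `𝐢 = (i₁, iₓ, i_y, i_z)`. -/
def Asym (n : ℕ) (iv : Fin 4 → ℕ) :
    Matrix (Fin n → Fin 2) (Fin n → Fin 2) ℂ :=
  ∑ p ∈ Finset.univ.filter
      (fun p : Fin n → Fin 4 =>
        ∀ a, (Finset.univ.filter fun i => p i = a).card = iv a),
    pauliWord n p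

/-! ### Auxiliary lemmas -/


lemma pauli_pair (x y : Fin 4) :
    (∑ a : Fin 2, ∑ b : Fin 2, (starRingEnd ℂ) (pauli x a b) * pauli y a b)
      = if x = y then 2 else 0 := by
  fin_cases x <;> fin_cases y <;>
    simp [pauli, Fin.sum_univ_succ, Complex.ext_iff] <;> norm_num

lemma pairing_pauliWord (n : ℕ) (p q : Fin n → Fin 4) :
    ∑ s : Fin n → Fin 2, ∑ t : Fin n → Fin 2,
      (starRingEnd ℂ) (pauliWord n p s t) * pauliWord n q s t
      = if p = q then (2 : ℂ) ^ n else 0 := by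
  have key : ∀ s t : Fin n → Fin 2,
      (starRingEnd ℂ) (pauliWord n p s t) * pauliWord n q s t
        = ∏ i, (starRingEnd ℂ) (pauli (p i) (s i) (t i)) * pauli (q i) (s i) (t i) := by
    intro s t
    simp [pauliWord, map_prod, Finset.prod_mul_distrib]
  simp only [key]
  have step1 : ∀ s : Fin n → Fin 2,
      (∑ t : Fin n → Fin 2, ∏ i,
        (starRingEnd ℂ) (pauli (p i) (s i) (t i)) * pauli (q i) (s i) (t i))
      = ∏ i, ∑ b : Fin 2, (starRingEnd ℂ) (pauli (p i) (s i) b) * pauli (q i) (s i) b := by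
    intro s
    rw [Finset.prod_univ_sum, Fintype.piFinset_univ]
  simp only [step1]
  rw [show (∑ s : Fin n → Fin 2, ∏ i, ∑ b : Fin 2,
      (starRingEnd ℂ) (pauli (p i) (s i) b) * pauli (q i) (s i) b)
      = ∏ i, ∑ a : Fin 2, ∑ b : Fin 2,
      (starRingEnd ℂ) (pauli (p i) a b) * pauli (q i) a b from by
    rw [Finset.prod_univ_sum, Fintype.piFinset_univ]]
  simp only [pauli_pair]
  by_cases h : p = q
  · subst h; simp
  · rw [if_neg h]
    obtain ⟨i, hi⟩ := Function.ne_iff.mp h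
    exact Finset.prod_eq_zero (Finset.mem_univ i) (if_neg hi)

lemma pauliWord_li (n : ℕ) : LinearIndependent ℂ (pauliWord n) := by
  rw [Fintype.linearIndependent_iff]
  intro g hg q
  have h0 : ∑ s : Fin n → Fin 2, ∑ t : Fin n → Fin 2,
      (starRingEnd ℂ) (pauliWord n q s t) * (∑ p, g p • pauliWord n p) s t = 0 := by
    rw [hg]; simp
  have h1 : ∀ s t : Fin n → Fin 2,
      (starRingEnd ℂ) (pauliWord n q s t) * (∑ p, g p • pauliWord n p) s t
        = ∑ p, g p * ((starRingEnd ℂ) (pauliWord n q s t) * pauliWord n p s t) := by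
    intro s t
    rw [Matrix.sum_apply, Finset.mul_sum]
    exact Finset.sum_congr rfl fun p _ => by simp [Matrix.smul_apply]; ring
  simp only [h1] at h0
  have h2 : ∑ p, g p * ∑ s : Fin n → Fin 2, ∑ t : Fin n → Fin 2,
      ((starRingEnd ℂ) (pauliWord n q s t) * pauliWord n p s t) = 0 := by
    rw [← h0]
    simp_rw [Finset.mul_sum]
    rw [Finset.sum_comm]
    exact Finset.sum_congr rfl fun s _ => Finset.sum_comm
  simp only [pairing_pauliWord n q] at h2
  simp only [mul_ite, mul_zero, Finset.sum_ite_eq, Finset.mem_univ, if_true] at h2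
  exact (mul_eq_zero.mp h2).resolve_right (pow_ne_zero n two_ne_zero)

lemma card_eq_finrank (n : ℕ) : Fintype.card (Fin n → Fin 4)
    = Module.finrank ℂ (Matrix (Fin n → Fin 2) (Fin n → Fin 2) ℂ) := by
  simp [Module.finrank_matrix]
  rw [show (4:ℕ) = 2^2 from rfl, ← pow_mul, two_mul, pow_add]

def pauliBasis (n : ℕ) : Module.Basis (Fin n → Fin 4) ℂ
    (Matrix (Fin n → Fin 2) (Fin n → Fin 2) ℂ) :=
  basisOfLinearIndependentOfCardEqFinrank (pauliWord_li n) (card_eq_finrank n)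

lemma pauliBasis_eq (n : ℕ) (p : Fin n → Fin 4) : pauliBasis n p = pauliWord n p := by
  simp [pauliBasis, coe_basisOfLinearIndependentOfCardEqFinrank]

lemma conj_apply (n : ℕ) (π : Equiv.Perm (Fin n))
    (H : Matrix (Fin n → Fin 2) (Fin n → Fin 2) ℂ) (s t : Fin n → Fin 2) :
    (Rmat n π * H * Rmat n π⁻¹) s t = H (s ∘ π) (t ∘ π) := by
  have h1 : (Rmat n π * H) s = H (s ∘ π) := by
    funext u
    rw [Matrix.mul_apply]
    simp [Rmat, ite_mul]
  rw [Matrix.mul_apply]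
  simp only [h1]
  have h2 : ∀ u : Fin n → Fin 2, (t = u ∘ ⇑(Equiv.symm π)) = (u = t ∘ ⇑π) := by
    intro u
    apply propext
    constructor
    · intro h; funext i; rw [h]; simp
    · intro h; funext i; rw [h]; simp
  simp [Rmat, h2, mul_ite]

lemma conj_pauliWord (n : ℕ) (π : Equiv.Perm (Fin n)) (p : Fin n → Fin 4) :
    Rmat n π * pauliWord n p * Rmat n π⁻¹ = pauliWord n (p ∘ ⇑π⁻¹) := by
  ext s t
  rw [conj_apply]
  show (∏ i, pauli (p i) (s (π i)) (t (π i))) = ∏ i, pauli (p (π⁻¹ i)) (s i) (t i)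
  rw [← Equiv.prod_comp π (fun j => pauli (p (π⁻¹ j)) (s j) (t j))]
  simp

/-- The "type" of a word: the fiber cardinalities. -/
def pType (n : ℕ) (p : Fin n → Fin 4) : Fin 4 → ℕ :=
  fun a => (Finset.univ.filter fun i => p i = a).card

lemma pType_comp (n : ℕ) (π : Equiv.Perm (Fin n)) (p : Fin n → Fin 4) :
    pType n (p ∘ ⇑π) = pType n p := by
  funext a
  apply Finset.card_bij (fun i _ => π i)
  · intro i hi; simp only [Finset.mem_filter, Finset.mem_univ, true_and] at *; exact hi
  · intro i _ j _ h; exact π.injective h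
  · intro j hj
    refine ⟨π⁻¹ j, ?_, by simp⟩
    simp only [Finset.mem_filter, Finset.mem_univ, true_and, Function.comp] at *
    simpa using hj

lemma sum_pType (n : ℕ) (p : Fin n → Fin 4) : ∑ a, pType n p a = n := by
  have := Finset.card_eq_sum_card_fiberwise
    (f := p) (s := Finset.univ) (t := Finset.univ) (fun x _ => Finset.mem_univ _)
  simpa [pType] using this.symm

lemma exists_perm_of_pType_eq {n : ℕ} {p q : Fin n → Fin 4}
    (h : pType n p = pType n q) : ∃ e : Equiv.Perm (Fin n), p = q ∘ ⇑e := by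
  have hcard : ∀ a : Fin 4, Fintype.card {i : Fin n // p i = a}
      = Fintype.card {i : Fin n // q i = a} := by
    intro a
    rw [Fintype.card_subtype, Fintype.card_subtype]
    exact congrFun h a
  have fib : ∀ a : Fin 4, {i : Fin n // p i = a} ≃ {i : Fin n // q i = a} :=
    fun a => Fintype.equivOfCardEq (hcard a)
  let e : Fin n ≃ Fin n :=
    ((Equiv.sigmaFiberEquiv p).symm.trans
      (Equiv.sigmaCongrRight fib)).trans (Equiv.sigmaFiberEquiv q)
  refine ⟨e, funext fun i => ?_⟩
  show p i = q (e i)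
  have : e i = (fib (p i) ⟨i, rfl⟩ : {j // q j = p i}).1 := rfl
  rw [this, (fib (p i) ⟨i, rfl⟩).2]

lemma exists_pType : ∀ (n : ℕ) (iv : Fin 4 → ℕ), (∑ a, iv a = n) →
    ∃ p : Fin n → Fin 4, pType n p = iv := by
  intro n
  induction n with
  | zero =>
    intro iv h
    refine ⟨Fin.elim0, funext fun a => ?_⟩
    have : iv a = 0 := by
      have := Finset.sum_eq_zero_iff.mp h
      exact this a (Finset.mem_univ a)
    simp [pType, this]
  | succ m ih =>
    intro iv h
    have hpos : ∃ a₀, 0 < iv a₀ := by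
      by_contra hc
      push_neg at hc
      simp only [Nat.le_zero] at hc
      rw [Finset.sum_congr rfl fun a _ => hc a] at h
      simp at h
    obtain ⟨a₀, ha₀⟩ := hpos
    set iv' : Fin 4 → ℕ := Function.update iv a₀ (iv a₀ - 1) with hiv'
    have h1 : ∑ a ∈ Finset.univ.erase a₀, iv' a = ∑ a ∈ Finset.univ.erase a₀, iv a :=
      Finset.sum_congr rfl fun a ha =>
        Function.update_of_ne (Finset.ne_of_mem_erase ha) _ _
    have e1 : iv a₀ + ∑ a ∈ Finset.univ.erase a₀, iv a = m + 1 := by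
      rw [Finset.add_sum_erase _ _ (Finset.mem_univ a₀)]; exact h
    have hsum' : ∑ a, iv' a = m := by
      rw [← Finset.add_sum_erase _ _ (Finset.mem_univ a₀), h1]
      have : iv' a₀ = iv a₀ - 1 := by simp [hiv']
      omega
    obtain ⟨p', hp'⟩ := ih iv' hsum'
    refine ⟨Fin.cons a₀ p', funext fun a => ?_⟩
    have hcount : pType (m+1) (Fin.cons a₀ p') a
        = (if a₀ = a then 1 else 0) + pType m p' a := by
      simp only [pType, Finset.card_filter]
      rw [Fin.sum_univ_succ]
      simp
    rw [hcount, congrFun hp' a]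
    by_cases hA : a₀ = a
    · subst hA; simp [hiv']; omega
    · simp [hiv', Function.update_of_ne (Ne.symm hA), hA]

lemma Asym_eq (n : ℕ) (iv : Fin 4 → ℕ) :
    Asym n iv = ∑ p ∈ Finset.univ.filter (fun p => pType n p = iv), pauliWord n p := by
  unfold Asym
  congr 1
  apply Finset.filter_congr
  intro p _
  simp [pType, funext_iff]

lemma conj_Asym (n : ℕ) (π : Equiv.Perm (Fin n)) (iv : Fin 4 → ℕ) :
    Rmat n π * Asym n iv * Rmat n π⁻¹ = Asym n iv := by
  rw [Asym_eq, Finset.mul_sum, Finset.sum_mul]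
  simp_rw [conj_pauliWord]
  refine Finset.sum_bij' (fun p _ => p ∘ ⇑π⁻¹) (fun p _ => p ∘ ⇑π) ?_ ?_ ?_ ?_ ?_
  · intro p hp
    rw [Finset.mem_filter] at hp
    exact Finset.mem_filter.mpr ⟨Finset.mem_univ _, by rw [pType_comp]; exact hp.2⟩
  · intro p hp
    rw [Finset.mem_filter] at hp
    exact Finset.mem_filter.mpr ⟨Finset.mem_univ _, by rw [pType_comp]; exact hp.2⟩
  · intro p _; funext i; simp
  · intro p _; funext i; simp
  · intro p _; rfl

lemma repr_constant {n : ℕ} {H : Matrix (Fin n → Fin 2) (Fin n → Fin 2) ℂ}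
    (hH : ∀ π : Equiv.Perm (Fin n), Rmat n π * H * Rmat n π⁻¹ = H)
    (π : Equiv.Perm (Fin n)) (q : Fin n → Fin 4) :
    (pauliBasis n).repr H (q ∘ ⇑π) = (pauliBasis n).repr H q := by
  set c : (Fin n → Fin 4) → ℂ := ⇑((pauliBasis n).repr H) with hc
  have hrep : H = ∑ p, c p • pauliBasis n p := ((pauliBasis n).sum_repr H).symm
  have key : Rmat n π * H * Rmat n π⁻¹ = ∑ r, c (r ∘ ⇑π) • pauliBasis n r := by
    calc Rmat n π * H * Rmat n π⁻¹
        = ∑ p, c p • (Rmat n π * pauliWord n p * Rmat n π⁻¹) := by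
          conv_lhs => rw [hrep]
          rw [Finset.mul_sum, Finset.sum_mul]
          exact Finset.sum_congr rfl fun p _ => by
            rw [pauliBasis_eq, Matrix.mul_smul, Matrix.smul_mul]
      _ = ∑ p, c p • pauliWord n (p ∘ ⇑π⁻¹) := by simp_rw [conj_pauliWord]
      _ = ∑ r, c (r ∘ ⇑π) • pauliBasis n r := by
          apply Fintype.sum_equiv (Equiv.arrowCongr π (Equiv.refl (Fin 4)))
          intro p
          have h1 : (Equiv.arrowCongr π (Equiv.refl (Fin 4))) p = p ∘ ⇑π⁻¹ := by
            funext i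
            simp [Equiv.arrowCongr_apply, Equiv.Perm.inv_def]
          rw [h1, pauliBasis_eq]
          have h2 : (p ∘ ⇑π⁻¹) ∘ ⇑π = p := by funext i; simp
          rw [h2]
  have e1 : (fun r => c (r ∘ ⇑π)) = c := by
    calc (fun r => c (r ∘ ⇑π))
        = ⇑((pauliBasis n).repr (∑ r, c (r ∘ ⇑π) • pauliBasis n r)) := by
          rw [(pauliBasis n).repr_sum_self]
      _ = ⇑((pauliBasis n).repr H) := by rw [← key, hH π]
      _ = c := rfl
  exact congrFun e1 q

/-- The count map as an equiv between multisets and functions. -/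
def countEquiv : Multiset (Fin 4) ≃ (Fin 4 → ℕ) :=
  Multiset.toFinsupp.toEquiv.trans Finsupp.equivFunOnFinite

lemma countEquiv_apply (m : Multiset (Fin 4)) (a : Fin 4) :
    countEquiv m a = m.count a := by
  simp [countEquiv]

def symEquiv (n : ℕ) : Sym (Fin 4) n ≃ {iv : Fin 4 → ℕ // ∑ a, iv a = n} :=
  Equiv.subtypeEquiv countEquiv (by
    intro m
    have hm : ∑ a : Fin 4, m.count a = Multiset.card m := by
      rw [← Multiset.toFinset_sum_count_eq]
      refine (Finset.sum_subset (Finset.subset_univ _) ?_).symm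
      intro a _ ha
      simpa [Multiset.count_eq_zero] using ha
    constructor
    · intro h; rw [← h, ← hm]; exact Finset.sum_congr rfl fun a _ => countEquiv_apply m a
    · intro h; rw [← h, ← hm]; exact (Finset.sum_congr rfl fun a _ => countEquiv_apply m a).symm)

/-- The symmetrized Pauli operators `A_𝐢`, indexed by 4-tuples summing to `n`,
are linearly independent and span the commutant of the permutation
representation of `Sₙ` on `(ℂ²)^⊗n`; hence the algebra of `Sₙ`-invariant
operators on `n` qubits has dimension `C(n+3,3)`. -/
theorem symmetrized_pauli_basis_of_commutant (n : ℕ) :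
    LinearIndependent ℂ
        (fun iv : {iv : Fin 4 → ℕ // ∑ a, iv a = n} => Asym n iv.1) ∧
      (∀ H : Matrix (Fin n → Fin 2) (Fin n → Fin 2) ℂ,
        H ∈ Submodule.span ℂ
            (Set.range fun iv : {iv : Fin 4 → ℕ // ∑ a, iv a = n} => Asym n iv.1) ↔
          ∀ π : Equiv.Perm (Fin n), Rmat n π * H * Rmat n π⁻¹ = H) ∧
      Module.finrank ℂ
          ↥(Submodule.span ℂ
            (Set.range fun iv : {iv : Fin 4 → ℕ // ∑ a, iv a = n} => Asym n iv.1)) =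
        (n + 3).choose 3 := by
  haveI instF : Fintype {iv : Fin 4 → ℕ // ∑ a, iv a = n} :=
    Fintype.ofEquiv _ (symEquiv n)
  have hLI : LinearIndependent ℂ
      (fun iv : {iv : Fin 4 → ℕ // ∑ a, iv a = n} => Asym n iv.1) := by
    rw [linearIndependent_iff']
    intro s g hsum iv hivs
    set d : (Fin n → Fin 4) → ℂ := fun p => ∑ j ∈ s, if pType n p = j.1 then g j else 0
      with hd
    have hd0 : ∑ p, d p • pauliWord n p = 0 := by
      rw [← hsum]
      calc (∑ p, d p • pauliWord n p)
          = ∑ p, ∑ j ∈ s, (if pType n p = j.1 then g j else 0) • pauliWord n p := by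
            exact Finset.sum_congr rfl fun p _ => Finset.sum_smul
        _ = ∑ j ∈ s, ∑ p, (if pType n p = j.1 then g j else 0) • pauliWord n p :=
            Finset.sum_comm
        _ = ∑ j ∈ s, g j • Asym n j.1 := by
            refine Finset.sum_congr rfl fun j _ => ?_
            rw [Asym_eq, Finset.smul_sum]
            simp only [ite_smul, zero_smul]
            exact (Finset.sum_filter _ _).symm
    have hdz := Fintype.linearIndependent_iff.mp (pauliWord_li n) d hd0
    obtain ⟨p₀, hp₀⟩ := exists_pType n iv.1 iv.2
    have hz : ∑ j ∈ s, (if pType n p₀ = j.1 then g j else 0) = 0 := hdz p₀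
    have hsingle := Finset.sum_eq_single (s := s)
      (f := fun j => if pType n p₀ = j.1 then g j else 0) iv
      (fun j _ hne => if_neg fun hcontra => hne (Subtype.ext (by rw [← hcontra, hp₀])))
      (fun habs => absurd hivs habs)
    rw [hsingle] at hz
    simpa [hp₀] using hz
  refine ⟨hLI, fun H => ⟨?_, ?_⟩, ?_⟩
  · intro hmem π
    induction hmem using Submodule.span_induction with
    | mem x hx =>
      obtain ⟨iv, rfl⟩ := hx
      exact conj_Asym n π iv.1
    | zero => simp
    | add x y _ _ hx hy => rw [Matrix.mul_add, Matrix.add_mul, hx, hy]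
    | smul a x _ hx => rw [Matrix.mul_smul, Matrix.smul_mul, hx]
  · intro hinv
    set c : (Fin n → Fin 4) → ℂ := ⇑((pauliBasis n).repr H) with hc
    have hcst : ∀ p q : Fin n → Fin 4, pType n p = pType n q → c p = c q := by
      intro p q h
      obtain ⟨e, rfl⟩ := exists_perm_of_pType_eq h
      exact repr_constant hinv e q
    have hrep : H = ∑ p, c p • pauliWord n p := by
      have h := ((pauliBasis n).sum_repr H).symm
      simpa only [pauliBasis_eq] using h
    rw [hrep]
    rw [← Finset.sum_fiberwise_of_maps_to
      (g := pType n) (t := Finset.univ.image (pType n))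
      (fun p _ => Finset.mem_image_of_mem _ (Finset.mem_univ p))]
    apply Submodule.sum_mem
    intro iv hiv
    obtain ⟨p₀, _, hp₀⟩ := Finset.mem_image.mp hiv
    have hconst : ∑ p ∈ Finset.univ.filter (fun p => pType n p = iv),
        c p • pauliWord n p = c p₀ • Asym n iv := by
      rw [Asym_eq, Finset.smul_sum]
      refine Finset.sum_congr rfl fun p hp => ?_
      rw [hcst p p₀ (by rw [(Finset.mem_filter.mp hp).2, hp₀])]
    rw [hconst]
    refine Submodule.smul_mem _ _ (Submodule.subset_span ?_)
    exact ⟨⟨iv, by rw [← hp₀]; exact sum_pType n p₀⟩, rfl⟩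
  · rw [finrank_span_eq_card hLI]
    have hcard : Fintype.card {iv : Fin 4 → ℕ // ∑ a, iv a = n}
        = Fintype.card (Sym (Fin 4) n) :=
      Fintype.card_congr (symEquiv n).symm
    rw [hcard, Sym.card_sym_eq_choose]
    rw [show Fintype.card (Fin 4) + n - 1 = n + 3 by rw [Fintype.card_fin]; clear instF hcard hLI; omega]
    have h3 := Nat.choose_symm (n := n + 3) (hk := Nat.le_add_left 3 n)
    rwa [Nat.add_sub_cancel] at h3
end
end

section
/- Let |Ψ⟩ be the two-qubit singlet and for 0 ≤ q ≤ m let |Σ_m^q⟩ be the sum of all computational basis states on m qubits with exactly q ones. For a two-row Young diagram λ = (λ₀, λ₁) with λ₀ + λ₁ = n, the Young symmetrizer Π_{p_{λ0}} for the column-standard tableau applied to the state |x_q⟩ = |01⟩^⊗λ₁ ⊗ |0⟩^⊗(n-2λ₁-q) ⊗ |1⟩^⊗q yields (up to normalization) the state |Ψ⟩^⊗λ₁ ⊗ |Σ_{n-2λ₁}^q⟩/√C(n-2λ₁, q). -/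
open Matrix

noncomputable section

/-- The computational basis vector `|b⟩` of `(ℂ²)^⊗n`. -/
def basisVec (n : ℕ) (b : Fin n → Fin 2) : (Fin n → Fin 2) → ℂ :=
  fun s => if s = b then 1 else 0

/-- The bitstring of the state `|x_q⟩ = |01⟩^⊗λ₁ ⊗ |0⟩^⊗(n-2λ₁-q) ⊗ |1⟩^⊗q`. -/
def xqBits (n lam1 q : ℕ) : Fin n → Fin 2 := fun i =>
  if (i : ℕ) < 2 * lam1 then (if (i : ℕ) % 2 = 1 then 1 else 0)
  else if (i : ℕ) < n - q then 0 else 1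

/-- The amplitudes of the two-qubit singlet `(|01⟩ - |10⟩)/√2`. -/
def sing : Fin 2 → Fin 2 → ℂ := fun a b =>
  if a = 0 ∧ b = 1 then (Real.sqrt 2 : ℂ)⁻¹
  else if a = 1 ∧ b = 0 then -(Real.sqrt 2 : ℂ)⁻¹ else 0

/-- The state `|Ψ⟩^⊗λ₁ ⊗ |Σ_{n-2λ₁}^q⟩ / √C(n-2λ₁, q)`: `λ₁` singlets on the
first `λ₁` qubit pairs, and the (normalized) sum of all bitstrings with `q`
ones on the remaining `n - 2λ₁` qubits. -/
def targetState (n lam1 q : ℕ) (h2 : 2 * lam1 ≤ n) : (Fin n → Fin 2) → ℂ :=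
  fun s =>
    ((Real.sqrt ((n - 2 * lam1).choose q) : ℝ) : ℂ)⁻¹ *
      (∏ j : Fin lam1,
        sing (s ⟨2 * (j : ℕ), by have := j.2; omega⟩)
          (s ⟨2 * (j : ℕ) + 1, by have := j.2; omega⟩)) *
      (if (Finset.univ.filter fun i : Fin n =>
          2 * lam1 ≤ (i : ℕ) ∧ s i = 1).card = q then 1 else 0)

/-- The row of the cell occupied by qubit `i` in the column-standard tableau of
shape `(n - λ₁, λ₁)` (columns are the pairs `{2j, 2j+1}` for `j < λ₁`). -/
def rowLabel (n lam1 : ℕ) (i : Fin n) : ℕ :=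
  if (i : ℕ) < 2 * lam1 then (i : ℕ) % 2 else 0

/-- The column of the cell occupied by qubit `i` in the column-standard tableau
of shape `(n - λ₁, λ₁)`. -/
def colLabel (n lam1 : ℕ) (i : Fin n) : ℕ :=
  if (i : ℕ) < 2 * lam1 then (i : ℕ) / 2 else (i : ℕ)

/-- The row symmetrizer `∑_{r ∈ Row(p_λ)} R(r)`. -/
def rowSym (n lam1 : ℕ) : Matrix (Fin n → Fin 2) (Fin n → Fin 2) ℂ :=
  ∑ π ∈ Finset.univ.filter
      (fun π : Equiv.Perm (Fin n) => ∀ i, rowLabel n lam1 (π i) = rowLabel n lam1 i),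
    Rmat n π

/-- The column antisymmetrizer `∑_{c ∈ Col(p_λ)} sgn(c) R(c)`. -/
def colSym (n lam1 : ℕ) : Matrix (Fin n → Fin 2) (Fin n → Fin 2) ℂ :=
  ∑ π ∈ Finset.univ.filter
      (fun π : Equiv.Perm (Fin n) => ∀ i, colLabel n lam1 (π i) = colLabel n lam1 i),
    ((Equiv.Perm.sign π : ℤ) : ℂ) • Rmat n π

lemma Rmat_mulVec (n : ℕ) (π : Equiv.Perm (Fin n)) (v : (Fin n → Fin 2) → ℂ)
    (s : Fin n → Fin 2) : (Rmat n π).mulVec v s = v (s ∘ π) := by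
  simp only [Rmat, Matrix.mulVec, dotProduct, Matrix.of_apply, ite_mul, one_mul, zero_mul]
  simp
lemma sum_mulVec' {ι m : Type*} [Fintype m] [DecidableEq m] (s : Finset ι)
    (A : ι → Matrix m m ℂ) (v : m → ℂ) :
    (∑ a ∈ s, A a).mulVec v = ∑ a ∈ s, (A a).mulVec v := by
  ext i
  simp only [Matrix.mulVec, dotProduct, Matrix.sum_apply, Finset.sum_mul,
    Finset.sum_apply]
  rw [Finset.sum_comm]
def Ncount (n lam1 : ℕ) (b t : Fin n → Fin 2) : ℕ :=
  (Finset.univ.filter fun π : Equiv.Perm (Fin n) =>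
    (∀ i, rowLabel n lam1 (π i) = rowLabel n lam1 i) ∧ t ∘ π = b).card
lemma rowSym_mulVec_basis (n lam1 : ℕ) (b : Fin n → Fin 2) (t : Fin n → Fin 2) :
    (rowSym n lam1).mulVec (basisVec n b) t = (Ncount n lam1 b t : ℂ) := by
  rw [rowSym, sum_mulVec', Ncount]
  rw [Finset.sum_apply]
  simp only [Rmat_mulVec, basisVec]
  rw [Finset.sum_boole, ← Finset.filter_filter]
lemma colSym_mulVec (n lam1 : ℕ) (w : (Fin n → Fin 2) → ℂ) (s : Fin n → Fin 2) :
    (colSym n lam1).mulVec w s =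
      ∑ π ∈ Finset.univ.filter
        (fun π : Equiv.Perm (Fin n) => ∀ i, colLabel n lam1 (π i) = colLabel n lam1 i),
        ((Equiv.Perm.sign π : ℤ) : ℂ) * w (s ∘ π) := by
  rw [colSym, sum_mulVec', Finset.sum_apply]
  refine Finset.sum_congr rfl fun π _ => ?_
  rw [Matrix.smul_mulVec]
  simp [Rmat_mulVec]
def row0Count (n lam1 : ℕ) (t : Fin n → Fin 2) : ℕ :=
  (Finset.univ.filter fun i : Fin n => rowLabel n lam1 i = 0 ∧ t i = 1).card
def inT (n lam1 q : ℕ) (t : Fin n → Fin 2) : Prop :=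
  (∀ i : Fin n, (i : ℕ) < 2 * lam1 → (i : ℕ) % 2 = 1 → t i = 1) ∧ row0Count n lam1 t = q
instance (n lam1 q : ℕ) (t : Fin n → Fin 2) : Decidable (inT n lam1 q t) :=
  inferInstanceAs (Decidable (_ ∧ _))
lemma fin2_cases (x : Fin 2) : x = 0 ∨ x = 1 := by revert x; decide
lemma fin2_ne_one (x : Fin 2) (h : ¬ x = 1) : x = 0 := by revert x; decide
lemma fin2_ne_zero (x : Fin 2) (h : ¬ x = 0) : x = 1 := by revert x; decide
lemma rowPres_inv (n lam1 : ℕ) (σ : Equiv.Perm (Fin n))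
    (hσ : ∀ i, rowLabel n lam1 (σ i) = rowLabel n lam1 i) :
    ∀ i, rowLabel n lam1 (σ⁻¹ i) = rowLabel n lam1 i := by
  intro i
  conv_rhs => rw [← (show σ (σ⁻¹ i) = i from σ.apply_symm_apply i)]
  rw [hσ]
lemma row0Count_comp (n lam1 : ℕ) (σ : Equiv.Perm (Fin n))
    (hσ : ∀ i, rowLabel n lam1 (σ i) = rowLabel n lam1 i) (t : Fin n → Fin 2) :
    row0Count n lam1 (t ∘ σ) = row0Count n lam1 t := by
  refine Finset.card_bij' (fun i _ => σ i) (fun i _ => σ⁻¹ i) ?_ ?_ ?_ ?_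
  · intro a ha
    simp only [Finset.mem_filter, Finset.mem_univ, true_and] at ha ⊢
    exact ⟨(hσ a).trans ha.1, ha.2⟩
  · intro a ha
    simp only [Finset.mem_filter, Finset.mem_univ, true_and] at ha ⊢
    refine ⟨(rowPres_inv n lam1 σ hσ a).trans ha.1, ?_⟩
    simpa using ha.2
  · intro a _; simp
  · intro a _; simp
lemma inT_comp (n lam1 q : ℕ) (t : Fin n → Fin 2) (σ : Equiv.Perm (Fin n))
    (hσ : ∀ i, rowLabel n lam1 (σ i) = rowLabel n lam1 i) (ht : inT n lam1 q t) :
    inT n lam1 q (t ∘ σ) := by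
  obtain ⟨h1, h2⟩ := ht
  refine ⟨fun i hi hodd => ?_, (row0Count_comp n lam1 σ hσ t).trans h2⟩
  have hr : rowLabel n lam1 (σ i) = 1 := by
    rw [hσ]; simp [rowLabel, hi, hodd]
  simp only [rowLabel] at hr
  by_cases hlt : ((σ i : Fin n) : ℕ) < 2 * lam1
  · rw [if_pos hlt] at hr
    exact h1 (σ i) hlt hr
  · rw [if_neg hlt] at hr; omega
lemma card_tail (n m : ℕ) (hm : m ≤ n) :
    (Finset.univ.filter fun i : Fin n => n - m ≤ (i : ℕ)).card = m := by
  refine (Finset.card_bij' (fun (i : Fin n) _ => (i : ℕ) - (n - m))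
    (fun (k : ℕ) (hk : k ∈ Finset.range m) => (⟨k + (n - m), by
      simp only [Finset.mem_range] at hk; omega⟩ : Fin n)) ?_ ?_ ?_ ?_).trans
    (Finset.card_range m)
  · intro a ha
    simp only [Finset.mem_filter, Finset.mem_univ, true_and] at ha
    simp only [Finset.mem_range]
    have := a.isLt; omega
  · intro k hk
    simp only [Finset.mem_range] at hk
    simp only [Finset.mem_filter, Finset.mem_univ, true_and]
    omega
  · intro a ha
    simp only [Finset.mem_filter, Finset.mem_univ, true_and] at ha
    apply Fin.ext; simp; omega
  · intro k hk; simp only [Finset.mem_range] at hk; simp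
lemma inT_b0 (n lam1 q : ℕ) (h2 : 2 * lam1 ≤ n) (hq : q ≤ n - 2 * lam1) :
    inT n lam1 q (xqBits n lam1 q) := by
  constructor
  · intro i hi hodd
    simp [xqBits, hi, hodd]
  · have hset : (Finset.univ.filter fun i : Fin n =>
        rowLabel n lam1 i = 0 ∧ xqBits n lam1 q i = 1) =
        (Finset.univ.filter fun i : Fin n => n - q ≤ (i : ℕ)) := by
      apply Finset.filter_congr
      intro i _
      simp only [rowLabel, xqBits]
      constructor
      · rintro ⟨hr, hb⟩
        by_cases hi : (i : ℕ) < 2 * lam1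
        · rw [if_pos hi] at hr hb
          rw [hr] at hb
          simp at hb
        · rw [if_neg hi] at hb
          by_cases hnq : (i : ℕ) < n - q
          · rw [if_pos hnq] at hb; simp at hb
          · omega
      · intro hnq
        have hi : ¬ (i : ℕ) < 2 * lam1 := by omega
        rw [if_neg hi, if_neg hi, if_neg (by omega : ¬ (i : ℕ) < n - q)]
        simp
    rw [row0Count, hset]
    exact card_tail n q (by omega)
lemma row0Count_split (n lam1 : ℕ) (u v : Fin n → Fin 2) :
    row0Count n lam1 u =
      (Finset.univ.filter fun i : Fin n =>
        rowLabel n lam1 i = 0 ∧ u i = 1 ∧ v i = 1).card +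
      (Finset.univ.filter fun i : Fin n =>
        rowLabel n lam1 i = 0 ∧ u i = 1 ∧ ¬ v i = 1).card := by
  rw [row0Count, Finset.card_filter, Finset.card_filter, Finset.card_filter,
    ← Finset.sum_add_distrib]
  refine Finset.sum_congr rfl fun i _ => ?_
  by_cases hr : rowLabel n lam1 i = 0 <;> by_cases hu : u i = 1 <;>
    by_cases hv : v i = 1 <;> simp [hr, hu, hv]
lemma mismatch_swap (n lam1 q : ℕ) (t : Fin n → Fin 2)
    (ht : inT n lam1 q t) (hb : inT n lam1 q (xqBits n lam1 q))
    (i : Fin n) (hi : t i ≠ xqBits n lam1 q i) :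
    ∃ i' : Fin n, t i' ≠ xqBits n lam1 q i' ∧ rowLabel n lam1 i = rowLabel n lam1 i' ∧
      t i' = xqBits n lam1 q i ∧ t i = xqBits n lam1 q i' ∧ i' ≠ i := by
  set b := xqBits n lam1 q with hbdef
  have hrow : ∀ j : Fin n, t j ≠ b j → rowLabel n lam1 j = 0 := by
    intro j hj
    by_contra hr
    simp only [rowLabel] at hr
    by_cases hlt : (j : ℕ) < 2 * lam1
    · rw [if_pos hlt] at hr
      have hodd : (j : ℕ) % 2 = 1 := by omega
      rw [ht.1 j hlt hodd, hb.1 j hlt hodd] at hj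
      exact hj rfl
    · rw [if_neg hlt] at hr; exact hr rfl
  have hri : rowLabel n lam1 i = 0 := hrow i hi
  have hsplit1 := row0Count_split n lam1 t b
  have hsplit2 := row0Count_split n lam1 b t
  have hcomm : (Finset.univ.filter fun j : Fin n =>
      rowLabel n lam1 j = 0 ∧ t j = 1 ∧ b j = 1) =
      (Finset.univ.filter fun j : Fin n =>
      rowLabel n lam1 j = 0 ∧ b j = 1 ∧ t j = 1) := by
    apply Finset.filter_congr; intro j _; tauto
  have hcards : (Finset.univ.filter fun j : Fin n =>
      rowLabel n lam1 j = 0 ∧ t j = 1 ∧ ¬ b j = 1).card =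
      (Finset.univ.filter fun j : Fin n =>
      rowLabel n lam1 j = 0 ∧ b j = 1 ∧ ¬ t j = 1).card := by
    rw [hcomm] at hsplit1
    have h1 : row0Count n lam1 t = q := ht.2
    have h2 : row0Count n lam1 b = q := hb.2
    omega
  rcases fin2_cases (t i) with hti | hti
  · -- t i = 0, so b i = 1 : pick i' in the other set
    have hbi : b i = 1 := by
      rcases fin2_cases (b i) with h | h
      · exact absurd (hti.trans h.symm) hi
      · exact h
    have hne : (Finset.univ.filter fun j : Fin n =>
        rowLabel n lam1 j = 0 ∧ t j = 1 ∧ ¬ b j = 1).Nonempty := by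
      rw [← Finset.card_pos, hcards, Finset.card_pos]
      exact ⟨i, by simp [hri, hbi, hti]⟩
    obtain ⟨i', hi'⟩ := hne
    simp only [Finset.mem_filter, Finset.mem_univ, true_and] at hi'
    obtain ⟨hr', ht', hb'⟩ := hi'
    refine ⟨i', by rw [ht']; rw [hbdef] at hb' ⊢; intro h; exact hb' h.symm, by rw [hri, hr'],
      by rw [ht', hbi], by rw [hti, fin2_ne_one _ hb'], ?_⟩
    intro h; rw [h] at ht'; rw [ht'] at hti; simp at hti
  · -- t i = 1, so b i = 0
    have hbi : ¬ b i = 1 := by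
      intro h; exact hi (hti.trans h.symm)
    have hne : (Finset.univ.filter fun j : Fin n =>
        rowLabel n lam1 j = 0 ∧ b j = 1 ∧ ¬ t j = 1).Nonempty := by
      rw [← Finset.card_pos, ← hcards, Finset.card_pos]
      exact ⟨i, by simp [hri, hbi, hti]⟩
    obtain ⟨i', hi'⟩ := hne
    simp only [Finset.mem_filter, Finset.mem_univ, true_and] at hi'
    obtain ⟨hr', hb', ht'⟩ := hi'
    refine ⟨i', by rw [hb']; exact fun h => ht' (h ▸ rfl), by rw [hri, hr'],
      by rw [fin2_ne_one _ ht', fin2_ne_one _ hbi], by rw [hti, hb'], ?_⟩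
    intro h; rw [h] at ht'; exact ht' hti
lemma rowPres_swap (n lam1 : ℕ) (i i' : Fin n) (h : rowLabel n lam1 i = rowLabel n lam1 i') :
    ∀ x, rowLabel n lam1 ((Equiv.swap i i') x) = rowLabel n lam1 x := by
  intro x
  rw [Equiv.swap_apply_def]
  split_ifs with h1 h2
  · rw [h1, h]
  · rw [h2, h]
  · rfl
lemma exists_sigma (n lam1 q : ℕ) (h2 : 2 * lam1 ≤ n) (hq : q ≤ n - 2 * lam1) :
    ∀ t : Fin n → Fin 2, inT n lam1 q t →
      ∃ σ : Equiv.Perm (Fin n), (∀ i, rowLabel n lam1 (σ i) = rowLabel n lam1 i) ∧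
        (xqBits n lam1 q) ∘ σ = t := by
  have hb := inT_b0 n lam1 q h2 hq
  suffices H : ∀ d : ℕ, ∀ t : Fin n → Fin 2, inT n lam1 q t →
      (Finset.univ.filter fun i : Fin n => t i ≠ xqBits n lam1 q i).card = d →
      ∃ σ : Equiv.Perm (Fin n), (∀ i, rowLabel n lam1 (σ i) = rowLabel n lam1 i) ∧
        (xqBits n lam1 q) ∘ σ = t by
    intro t ht; exact H _ t ht rfl
  intro d
  induction d using Nat.strong_induction_on with
  | _ d ih =>
    intro t ht hd
    rcases Nat.eq_zero_or_pos d with rfl | hdpos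
    · -- t = b0
      have : t = xqBits n lam1 q := by
        funext i
        by_contra hne
        have : i ∈ Finset.univ.filter fun i : Fin n => t i ≠ xqBits n lam1 q i := by
          simp [hne]
        rw [Finset.card_eq_zero] at hd
        rw [hd] at this
        simp at this
      refine ⟨1, fun i => rfl, ?_⟩
      funext x; simp [this]
    · have hne : (Finset.univ.filter fun i : Fin n => t i ≠ xqBits n lam1 q i).Nonempty := by
        rw [← Finset.card_pos, hd]; exact hdpos
      obtain ⟨i, hi⟩ := hne
      simp only [Finset.mem_filter, Finset.mem_univ, true_and] at hi
      obtain ⟨i', hmis', hrow, hti', hti, hne'⟩ := mismatch_swap n lam1 q t ht hb i hi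
      set τ := Equiv.swap i i' with hτ
      have hτpres := rowPres_swap n lam1 i i' hrow
      have ht' : inT n lam1 q (t ∘ τ) := inT_comp n lam1 q t τ hτpres ht
      -- mismatch set of t ∘ τ is contained in erase of i
      have hsub : (Finset.univ.filter fun x : Fin n => (t ∘ τ) x ≠ xqBits n lam1 q x) ⊆
          (Finset.univ.filter fun x : Fin n => t x ≠ xqBits n lam1 q x).erase i := by
        intro x hx
        simp only [Finset.mem_filter, Finset.mem_univ, true_and, Function.comp] at hx
        rw [Finset.mem_erase]
        by_cases hxi : x = i
        · exfalso; apply hx; rw [hxi]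
          rw [hτ, Equiv.swap_apply_left]
          exact hti'
        · by_cases hxi' : x = i'
          · exfalso; apply hx; rw [hxi']
            rw [hτ, Equiv.swap_apply_right]
            exact hti
          · refine ⟨hxi, ?_⟩
            simp only [Finset.mem_filter, Finset.mem_univ, true_and]
            rw [hτ, Equiv.swap_apply_of_ne_of_ne hxi hxi'] at hx
            exact hx
      have hlt : (Finset.univ.filter fun x : Fin n => (t ∘ τ) x ≠ xqBits n lam1 q x).card < d := by
        calc (Finset.univ.filter fun x : Fin n => (t ∘ τ) x ≠ xqBits n lam1 q x).card
            ≤ ((Finset.univ.filter fun x : Fin n => t x ≠ xqBits n lam1 q x).erase i).card :=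
              Finset.card_le_card hsub
          _ = d - 1 := by
              rw [Finset.card_erase_of_mem (by simp [hi]), hd]
          _ < d := by omega
      obtain ⟨σ', hσ'pres, hσ'⟩ := ih _ hlt (t ∘ τ) ht' rfl
      refine ⟨σ' * τ, fun x => ?_, ?_⟩
      · rw [Equiv.Perm.mul_apply, hσ'pres, hτpres]
      · funext x
        have := congrFun hσ' (τ x)
        simp only [Function.comp, Equiv.Perm.mul_apply] at this ⊢
        rw [this, hτ, Equiv.swap_apply_self]
lemma Ncount_eq_zero (n lam1 q : ℕ) (h2 : 2 * lam1 ≤ n) (hq : q ≤ n - 2 * lam1)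
    (t : Fin n → Fin 2) (h : ¬ inT n lam1 q t) :
    Ncount n lam1 (xqBits n lam1 q) t = 0 := by
  rw [Ncount, Finset.card_eq_zero, Finset.filter_eq_empty_iff]
  rintro π - ⟨hpres, hcomp⟩
  apply h
  have : t = (xqBits n lam1 q) ∘ ⇑(π⁻¹) := by
    funext x
    have := congrFun hcomp (π⁻¹ x)
    simp only [Function.comp, (show π (π⁻¹ x) = x from π.apply_symm_apply x)] at this ⊢
    rw [← this]
  rw [this]
  exact inT_comp n lam1 q _ _ (rowPres_inv n lam1 π hpres) (inT_b0 n lam1 q h2 hq)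
lemma Ncount_const (n lam1 q : ℕ) (h2 : 2 * lam1 ≤ n) (hq : q ≤ n - 2 * lam1)
    (t : Fin n → Fin 2) (ht : inT n lam1 q t) :
    Ncount n lam1 (xqBits n lam1 q) t =
      Ncount n lam1 (xqBits n lam1 q) (xqBits n lam1 q) := by
  obtain ⟨σ, hσpres, hσ⟩ := exists_sigma n lam1 q h2 hq t ht
  rw [Ncount, Ncount]
  refine Finset.card_bij' (fun π _ => σ * π) (fun π _ => σ⁻¹ * π) ?_ ?_ ?_ ?_
  · rintro π hπ
    simp only [Finset.mem_filter, Finset.mem_univ, true_and] at hπ ⊢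
    obtain ⟨hpres, hcomp⟩ := hπ
    refine ⟨fun i => by rw [Equiv.Perm.mul_apply, hσpres, hpres], ?_⟩
    funext x
    simp only [Function.comp, Equiv.Perm.mul_apply]
    have h1 := congrFun hσ (π x)
    simp only [Function.comp] at h1
    rw [h1]
    exact congrFun hcomp x
  · rintro π hπ
    simp only [Finset.mem_filter, Finset.mem_univ, true_and] at hπ ⊢
    obtain ⟨hpres, hcomp⟩ := hπ
    refine ⟨fun i => by rw [Equiv.Perm.mul_apply, rowPres_inv n lam1 σ hσpres, hpres], ?_⟩
    funext x
    simp only [Function.comp, Equiv.Perm.mul_apply]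
    have h1 := congrFun hσ (σ⁻¹ (π x))
    simp only [Function.comp, (show σ (σ⁻¹ (π x)) = π x from σ.apply_symm_apply _)] at h1
    rw [← h1]
    exact congrFun hcomp x
  · intro π _; simp [← mul_assoc]
  · intro π _; simp [← mul_assoc]
lemma Ncount_pos (n lam1 q : ℕ) :
    0 < Ncount n lam1 (xqBits n lam1 q) (xqBits n lam1 q) := by
  rw [Ncount, Finset.card_pos]
  refine ⟨1, ?_⟩
  simp only [Finset.mem_filter, Finset.mem_univ, true_and]
  exact ⟨fun i => rfl, by funext x; rfl⟩
def flipFun (n lam1 : ℕ) (S : Finset (Fin lam1)) (i : Fin n) : Fin n :=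
  if h : (i : ℕ) < 2 * lam1 ∧ 2 * lam1 ≤ n then
    (if (⟨(i : ℕ) / 2, by omega⟩ : Fin lam1) ∈ S then
      ⟨2 * ((i : ℕ) / 2) + (1 - (i : ℕ) % 2), by have := i.isLt; omega⟩ else i)
  else i
lemma flipFun_involutive (n lam1 : ℕ) (S : Finset (Fin lam1)) :
    Function.Involutive (flipFun n lam1 S) := by
  intro i
  unfold flipFun
  by_cases h : (i : ℕ) < 2 * lam1 ∧ 2 * lam1 ≤ n
  · rw [dif_pos h]
    by_cases hmem : (⟨(i : ℕ) / 2, by omega⟩ : Fin lam1) ∈ S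
    · rw [if_pos hmem]
      set i' : Fin n := ⟨2 * ((i : ℕ) / 2) + (1 - (i : ℕ) % 2), by have := i.isLt; omega⟩
        with hi'
      have hv : (i' : ℕ) = 2 * ((i : ℕ) / 2) + (1 - (i : ℕ) % 2) := rfl
      have h' : (i' : ℕ) < 2 * lam1 ∧ 2 * lam1 ≤ n := by
        constructor
        · have := i.isLt; omega
        · exact h.2
      rw [dif_pos h']
      have hdiv : (i' : ℕ) / 2 = (i : ℕ) / 2 := by omega
      have hmem' : (⟨(i' : ℕ) / 2, by omega⟩ : Fin lam1) ∈ S := by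
        have : (⟨(i' : ℕ) / 2, by omega⟩ : Fin lam1) = ⟨(i : ℕ) / 2, by omega⟩ :=
          Fin.ext hdiv
        rw [this]; exact hmem
      rw [if_pos hmem']
      apply Fin.ext
      simp only
      omega
    · rw [if_neg hmem, dif_pos h, if_neg hmem]
  · rw [dif_neg h, dif_neg h]
def permOf (n lam1 : ℕ) (S : Finset (Fin lam1)) : Equiv.Perm (Fin n) :=
  (flipFun_involutive n lam1 S).toPerm
lemma permOf_high (n lam1 : ℕ) (S : Finset (Fin lam1)) (i : Fin n)
    (h : 2 * lam1 ≤ (i : ℕ)) : permOf n lam1 S i = i := by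
  show flipFun n lam1 S i = i
  unfold flipFun
  rw [dif_neg (by omega)]
lemma permOf_even (n lam1 : ℕ) (S : Finset (Fin lam1)) (h2 : 2 * lam1 ≤ n) (j : Fin lam1)
    (i i' : Fin n) (hi : (i : ℕ) = 2 * (j : ℕ)) (hi' : (i' : ℕ) = 2 * (j : ℕ) + 1) :
    permOf n lam1 S i = if j ∈ S then i' else i := by
  show flipFun n lam1 S i = _
  unfold flipFun
  have hj := j.isLt
  rw [dif_pos (by omega)]
  have hjj : (⟨(i : ℕ) / 2, by omega⟩ : Fin lam1) = j := Fin.ext (by simp; omega)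
  rw [hjj]
  by_cases hmem : j ∈ S
  · rw [if_pos hmem, if_pos hmem]
    apply Fin.ext; simp; omega
  · rw [if_neg hmem, if_neg hmem]
lemma permOf_odd (n lam1 : ℕ) (S : Finset (Fin lam1)) (h2 : 2 * lam1 ≤ n) (j : Fin lam1)
    (i i' : Fin n) (hi : (i : ℕ) = 2 * (j : ℕ)) (hi' : (i' : ℕ) = 2 * (j : ℕ) + 1) :
    permOf n lam1 S i' = if j ∈ S then i else i' := by
  show flipFun n lam1 S i' = _
  unfold flipFun
  have hj := j.isLt
  rw [dif_pos (by omega)]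
  have hjj : (⟨(i' : ℕ) / 2, by omega⟩ : Fin lam1) = j := Fin.ext (by simp; omega)
  rw [hjj]
  by_cases hmem : j ∈ S
  · rw [if_pos hmem, if_pos hmem]
    apply Fin.ext; simp; omega
  · rw [if_neg hmem, if_neg hmem]
lemma permOf_val (n lam1 : ℕ) (S : Finset (Fin lam1)) (i : Fin n) :
    ((permOf n lam1 S i : Fin n) : ℕ) / 2 = (i : ℕ) / 2 ∧
      ((i : ℕ) < 2 * lam1 → ((permOf n lam1 S i : Fin n) : ℕ) < 2 * lam1) ∧
      (2 * lam1 ≤ (i : ℕ) → permOf n lam1 S i = i) := by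
  have : permOf n lam1 S i = flipFun n lam1 S i := rfl
  rw [this]
  unfold flipFun
  by_cases h : (i : ℕ) < 2 * lam1 ∧ 2 * lam1 ≤ n
  · rw [dif_pos h]
    by_cases hmem : (⟨(i : ℕ) / 2, by omega⟩ : Fin lam1) ∈ S
    · rw [if_pos hmem]
      refine ⟨by simp; omega, fun _ => by simp; omega, fun hle => by omega⟩
    · rw [if_neg hmem]
      exact ⟨rfl, fun h' => h.1, fun _ => rfl⟩
  · rw [dif_neg h]
    exact ⟨rfl, fun h' => by have := i.isLt; omega, fun _ => rfl⟩
lemma colPres_permOf (n lam1 : ℕ) (S : Finset (Fin lam1)) :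
    ∀ i, colLabel n lam1 (permOf n lam1 S i) = colLabel n lam1 i := by
  intro i
  obtain ⟨hdiv, hlow, hhigh⟩ := permOf_val n lam1 S i
  unfold colLabel
  by_cases h : (i : ℕ) < 2 * lam1
  · rw [if_pos h, if_pos (hlow h), hdiv]
  · rw [hhigh (by omega), if_neg h]
lemma permOf_empty (n lam1 : ℕ) : permOf n lam1 (∅ : Finset (Fin lam1)) = 1 := by
  apply Equiv.ext
  intro i
  show flipFun n lam1 ∅ i = i
  unfold flipFun
  split_ifs with h h'
  · simp at h'
  · rfl
  · rfl
set_option maxHeartbeats 1000000 in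
lemma permOf_insert (n lam1 : ℕ) (h2 : 2 * lam1 ≤ n) (a : Fin lam1) (S : Finset (Fin lam1))
    (ha : a ∉ S) :
    permOf n lam1 (insert a S) =
      Equiv.swap (⟨2 * (a : ℕ), by have := a.isLt; omega⟩ : Fin n)
        (⟨2 * (a : ℕ) + 1, by have := a.isLt; omega⟩ : Fin n) * permOf n lam1 S := by
  have halt := a.isLt
  set ia : Fin n := ⟨2 * (a : ℕ), by omega⟩ with hia
  set ia' : Fin n := ⟨2 * (a : ℕ) + 1, by omega⟩ with hia'
  apply Equiv.ext
  intro i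
  rw [Equiv.Perm.mul_apply]
  by_cases hlt : (i : ℕ) < 2 * lam1
  · by_cases hja : (i : ℕ) / 2 = (a : ℕ)
    · -- i is in pair a ; a ∉ S so permOf S i = i
      set j : Fin lam1 := ⟨(i : ℕ) / 2, by omega⟩ with hj
      have hjeq : j = a := Fin.ext hja
      rcases Nat.mod_two_eq_zero_or_one (i : ℕ) with hpar | hpar
      · -- i even: i = ia
        have hieq : i = ia := Fin.ext (by simp [hia]; omega)
        have h1 := permOf_even n lam1 (insert a S) h2 a ia ia' rfl rfl
        have h0 := permOf_even n lam1 S h2 a ia ia' rfl rfl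
        rw [hieq, h1, h0, if_pos (Finset.mem_insert_self a S), if_neg ha,
          Equiv.swap_apply_left]
      · -- i odd: i = ia'
        have hieq : i = ia' := Fin.ext (by simp [hia']; omega)
        have h1 := permOf_odd n lam1 (insert a S) h2 a ia ia' rfl rfl
        have h0 := permOf_odd n lam1 S h2 a ia ia' rfl rfl
        rw [hieq, h1, h0, if_pos (Finset.mem_insert_self a S), if_neg ha,
          Equiv.swap_apply_right]
    · -- i not in pair a : permOf (insert a S) i = permOf S i, and swap fixes it
      have hsame : permOf n lam1 (insert a S) i = permOf n lam1 S i := by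
        show flipFun n lam1 (insert a S) i = flipFun n lam1 S i
        unfold flipFun
        rw [dif_pos ⟨hlt, h2⟩, dif_pos ⟨hlt, h2⟩]
        have : ((⟨(i : ℕ) / 2, by omega⟩ : Fin lam1) ∈ insert a S) ↔
            ((⟨(i : ℕ) / 2, by omega⟩ : Fin lam1) ∈ S) := by
          rw [Finset.mem_insert]
          constructor
          · rintro (h | h)
            · exfalso; apply hja; rw [Fin.ext_iff] at h; exact h
            · exact h
          · exact Or.inr
        by_cases hm : (⟨(i : ℕ) / 2, by omega⟩ : Fin lam1) ∈ S
        · rw [if_pos hm, if_pos (this.mpr hm)]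
        · rw [if_neg hm, if_neg (fun hh => hm (this.mp hh))]
      rw [hsame]
      obtain ⟨hdiv, hlow, _⟩ := permOf_val n lam1 S i
      refine (Equiv.swap_apply_of_ne_of_ne ?_ ?_).symm
      · intro hcontra
        rw [Fin.ext_iff] at hcontra
        simp [hia] at hcontra
        omega
      · intro hcontra
        rw [Fin.ext_iff] at hcontra
        simp [hia'] at hcontra
        omega
  · -- i high
    rw [permOf_high n lam1 _ i (by omega), permOf_high n lam1 _ i (by omega)]
    refine (Equiv.swap_apply_of_ne_of_ne ?_ ?_).symm
    · intro hcontra; rw [Fin.ext_iff] at hcontra; simp [hia] at hcontra; omega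
    · intro hcontra; rw [Fin.ext_iff] at hcontra; simp [hia'] at hcontra; omega
lemma sign_permOf (n lam1 : ℕ) (h2 : 2 * lam1 ≤ n) (S : Finset (Fin lam1)) :
    Equiv.Perm.sign (permOf n lam1 S) = (-1 : ℤˣ) ^ S.card := by
  induction S using Finset.induction_on with
  | empty => rw [permOf_empty]; simp
  | insert a S ha ih =>
    rw [permOf_insert n lam1 h2 a S ha, _root_.map_mul, ih, Finset.card_insert_of_notMem ha,
      Equiv.Perm.sign_swap (by intro h; rw [Fin.ext_iff] at h; simp at h)]
    rw [pow_succ]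
    exact mul_comm _ _
lemma colPres_structure (n lam1 : ℕ) (π : Equiv.Perm (Fin n))
    (hπ : ∀ i, colLabel n lam1 (π i) = colLabel n lam1 i) (i : Fin n) :
    (2 * lam1 ≤ (i : ℕ) → π i = i) ∧
      ((i : ℕ) < 2 * lam1 → ((π i : Fin n) : ℕ) < 2 * lam1 ∧
        ((π i : Fin n) : ℕ) / 2 = (i : ℕ) / 2) := by
  have h := hπ i
  unfold colLabel at h
  by_cases hi : (i : ℕ) < 2 * lam1 <;> by_cases hpi : ((π i : Fin n) : ℕ) < 2 * lam1
  · rw [if_pos hi, if_pos hpi] at h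
    exact ⟨fun hc => by omega, fun _ => ⟨hpi, h⟩⟩
  · rw [if_pos hi, if_neg hpi] at h
    have := i.isLt
    exact ⟨fun hc => by omega, fun _ => by omega⟩
  · rw [if_neg hi, if_pos hpi] at h
    exact ⟨fun _ => by omega, fun hc => by omega⟩
  · rw [if_neg hi, if_neg hpi] at h
    exact ⟨fun _ => Fin.ext h, fun hc => by omega⟩
lemma permOf_encode (n lam1 : ℕ) (h2 : 2 * lam1 ≤ n) (π : Equiv.Perm (Fin n))
    (hπ : ∀ i, colLabel n lam1 (π i) = colLabel n lam1 i) :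
    permOf n lam1 (Finset.univ.filter fun j : Fin lam1 =>
      π ⟨2 * (j : ℕ), by have := j.isLt; omega⟩ ≠ ⟨2 * (j : ℕ), by have := j.isLt; omega⟩) = π := by
  set S := Finset.univ.filter fun j : Fin lam1 =>
      π ⟨2 * (j : ℕ), by have := j.isLt; omega⟩ ≠ ⟨2 * (j : ℕ), by have := j.isLt; omega⟩
      with hS
  apply Equiv.ext
  intro i
  by_cases hlt : (i : ℕ) < 2 * lam1
  · have hjlt : (i : ℕ) / 2 < lam1 := by omega
    set j : Fin lam1 := ⟨(i : ℕ) / 2, hjlt⟩ with hj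
    set iE : Fin n := ⟨2 * ((i : ℕ) / 2), by omega⟩ with hiE
    set iO : Fin n := ⟨2 * ((i : ℕ) / 2) + 1, by omega⟩ with hiO
    have hiEv : (iE : ℕ) = 2 * ((i : ℕ) / 2) := rfl
    have hiOv : (iO : ℕ) = 2 * ((i : ℕ) / 2) + 1 := rfl
    have hjv : (j : ℕ) = (i : ℕ) / 2 := rfl
    have hmem : j ∈ S ↔ π iE ≠ iE := by rw [hS]; simp; exact Iff.rfl
    have hEcase : π iE = iE ∨ π iE = iO := by
      obtain ⟨-, hpair⟩ := colPres_structure n lam1 π hπ iE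
      obtain ⟨hl, hd⟩ := hpair (by omega)
      rcases Nat.mod_two_eq_zero_or_one ((π iE : Fin n) : ℕ) with hp | hp
      · left; apply Fin.ext; omega
      · right; apply Fin.ext; omega
    have hOcase : π iO = iE ∨ π iO = iO := by
      obtain ⟨-, hpair⟩ := colPres_structure n lam1 π hπ iO
      obtain ⟨hl, hd⟩ := hpair (by omega)
      rcases Nat.mod_two_eq_zero_or_one ((π iO : Fin n) : ℕ) with hp | hp
      · left; apply Fin.ext; omega
      · right; apply Fin.ext; omega
    have hEO : iE ≠ iO := by intro h; rw [Fin.ext_iff] at h; omega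
    have hinj : π iE ≠ π iO := fun h => hEO (π.injective h)
    rcases Nat.mod_two_eq_zero_or_one (i : ℕ) with hpar | hpar
    · have hieq : i = iE := Fin.ext (by omega)
      rw [hieq, permOf_even n lam1 S h2 j iE iO rfl rfl]
      rcases hEcase with hE | hE
      · rw [if_neg (fun hm => (hmem.mp hm) hE), hE]
      · rw [if_pos (hmem.mpr (fun hc => hEO (hc.symm.trans hE))), hE]
    · have hieq : i = iO := Fin.ext (by omega)
      rw [hieq, permOf_odd n lam1 S h2 j iE iO rfl rfl]
      rcases hEcase with hE | hE
      · have hO : π iO = iO := by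
          rcases hOcase with h | h
          · exfalso; exact hinj (hE.trans h.symm)
          · exact h
        rw [if_neg (fun hm => (hmem.mp hm) hE), hO]
      · have hO : π iO = iE := by
          rcases hOcase with h | h
          · exact h
          · exfalso; exact hinj (hE.trans h.symm)
        rw [if_pos (hmem.mpr (fun hc => hEO (hc.symm.trans hE))), hO]
  · rw [permOf_high n lam1 S i (by omega),
      (colPres_structure n lam1 π hπ i).1 (by omega)]
lemma encode_permOf (n lam1 : ℕ) (h2 : 2 * lam1 ≤ n) (S : Finset (Fin lam1)) :
    (Finset.univ.filter fun j : Fin lam1 =>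
      permOf n lam1 S ⟨2 * (j : ℕ), by have := j.isLt; omega⟩ ≠
        ⟨2 * (j : ℕ), by have := j.isLt; omega⟩) = S := by
  ext j
  have hjlt := j.isLt
  simp only [Finset.mem_filter, Finset.mem_univ, true_and]
  rw [permOf_even n lam1 S h2 j ⟨2 * (j : ℕ), by omega⟩ ⟨2 * (j : ℕ) + 1, by omega⟩ rfl rfl]
  by_cases hm : j ∈ S
  · rw [if_pos hm]
    simp only [hm, iff_true]
    intro h; rw [Fin.ext_iff] at h; simp at h
  · rw [if_neg hm]
    simp [hm]
lemma colPres_sum (n lam1 : ℕ) (h2 : 2 * lam1 ≤ n) (f : Equiv.Perm (Fin n) → ℂ) :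
    ∑ π ∈ Finset.univ.filter
      (fun π : Equiv.Perm (Fin n) => ∀ i, colLabel n lam1 (π i) = colLabel n lam1 i), f π
      = ∑ S : Finset (Fin lam1), f (permOf n lam1 S) := by
  refine Finset.sum_bij' (fun π hπ => (Finset.univ.filter fun j : Fin lam1 =>
      π ⟨2 * (j : ℕ), by have := j.isLt; omega⟩ ≠ ⟨2 * (j : ℕ), by have := j.isLt; omega⟩))
    (fun S _ => permOf n lam1 S) (fun π hπ => Finset.mem_univ _) ?_ ?_ ?_ ?_
  · intro S _
    simp only [Finset.mem_filter, Finset.mem_univ, true_and]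
    exact colPres_permOf n lam1 S
  · intro π hπ
    simp only [Finset.mem_filter, Finset.mem_univ, true_and] at hπ
    exact permOf_encode n lam1 h2 π hπ
  · intro S _
    exact encode_permOf n lam1 h2 S
  · intro π hπ
    simp only [Finset.mem_filter, Finset.mem_univ, true_and] at hπ
    rw [permOf_encode n lam1 h2 π hπ]
lemma sing_same (x y : Fin 2) (h : x = y) : sing x y = 0 := by
  subst h
  rcases fin2_cases x with h | h <;> simp [sing, h]
lemma sqrt2C_ne : ((Real.sqrt 2 : ℝ) : ℂ) ≠ 0 := by
  rw [Ne, Complex.ofReal_eq_zero]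
  positivity
lemma key_sum (n lam1 q : ℕ) (h2 : 2 * lam1 ≤ n) (hq : q ≤ n - 2 * lam1)
    (s : Fin n → Fin 2) :
    ∑ S : Finset (Fin lam1), (-1 : ℂ) ^ S.card *
        (if inT n lam1 q (s ∘ (permOf n lam1 S)) then 1 else 0) =
      ((Real.sqrt 2 : ℝ) : ℂ) ^ lam1 *
        ((Real.sqrt ((n - 2 * lam1).choose q) : ℝ) : ℂ) *
        targetState n lam1 q h2 s := by
  by_cases hgood : ∀ j : Fin lam1,
      s ⟨2 * (j : ℕ), by have := j.isLt; omega⟩ ≠ s ⟨2 * (j : ℕ) + 1, by have := j.isLt; omega⟩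
  · -- all pairs are 01 or 10
    set S₀ : Finset (Fin lam1) := Finset.univ.filter
      (fun j : Fin lam1 => s ⟨2 * (j : ℕ), by have := j.isLt; omega⟩ = 1) with hS₀
    have hmemS₀ : ∀ j : Fin lam1, j ∈ S₀ ↔ s ⟨2 * (j : ℕ), by have := j.isLt; omega⟩ = 1 := by
      intro j; rw [hS₀]; simp
    have hLHS : ∑ S : Finset (Fin lam1), (-1 : ℂ) ^ S.card *
        (if inT n lam1 q (s ∘ (permOf n lam1 S)) then 1 else 0) =
        (-1 : ℂ) ^ S₀.card * (if inT n lam1 q (s ∘ (permOf n lam1 S₀)) then 1 else 0) := by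
      apply Finset.sum_eq_single S₀
      · intro S _ hSne
        have : ∃ j : Fin lam1, ¬ (j ∈ S ↔ j ∈ S₀) := by
          by_contra hall
          push_neg at hall
          exact hSne (Finset.ext fun j => hall j)
        obtain ⟨j, hj⟩ := this
        have hjlt := j.isLt
        have hnotT : ¬ inT n lam1 q (s ∘ (permOf n lam1 S)) := by
          intro hT
          have hval := hT.1 ⟨2 * (j : ℕ) + 1, by omega⟩
            (by show 2 * (j : ℕ) + 1 < 2 * lam1; omega)
            (by show (2 * (j : ℕ) + 1) % 2 = 1; omega)
          simp only [Function.comp] at hval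
          rw [permOf_odd n lam1 S h2 j ⟨2 * (j : ℕ), by omega⟩ ⟨2 * (j : ℕ) + 1, by omega⟩
            rfl rfl] at hval
          by_cases hjS : j ∈ S
          · rw [if_pos hjS] at hval
            exact hj ⟨fun _ => (hmemS₀ j).mpr hval, fun _ => hjS⟩
          · rw [if_neg hjS] at hval
            have hE1 : s ⟨2 * (j : ℕ), by omega⟩ ≠ 1 := by
              intro hE
              exact hgood j (hE.trans hval.symm)
            have hjS₀ : j ∉ S₀ := fun hc => hE1 ((hmemS₀ j).mp hc)
            exact hj ⟨fun hc => absurd hc hjS, fun hc => absurd hc hjS₀⟩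
        rw [if_neg hnotT, mul_zero]
      · intro h; exact absurd (Finset.mem_univ S₀) h
    rw [hLHS]
    -- evaluate the indicator at S₀
    have hpart1 : ∀ i : Fin n, (i : ℕ) < 2 * lam1 → (i : ℕ) % 2 = 1 →
        (s ∘ (permOf n lam1 S₀)) i = 1 := by
      intro i hi hodd
      have hjlt : (i : ℕ) / 2 < lam1 := by omega
      have hieq : i = (⟨2 * ((i : ℕ) / 2) + 1, by omega⟩ : Fin n) := Fin.ext (by simp; omega)
      simp only [Function.comp]
      rw [hieq, permOf_odd n lam1 S₀ h2 ⟨(i : ℕ) / 2, hjlt⟩ ⟨2 * ((i : ℕ) / 2), by omega⟩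
        ⟨2 * ((i : ℕ) / 2) + 1, by omega⟩ rfl rfl]
      by_cases hjS : (⟨(i : ℕ) / 2, hjlt⟩ : Fin lam1) ∈ S₀
      · rw [if_pos hjS]
        exact (hmemS₀ _).mp hjS
      · rw [if_neg hjS]
        have hE0 : s ⟨2 * ((i : ℕ) / 2), by omega⟩ = 0 :=
          fin2_ne_one _ (fun hc => hjS ((hmemS₀ _).mpr hc))
        apply fin2_ne_zero
        intro hc
        exact hgood ⟨(i : ℕ) / 2, hjlt⟩ (hE0.trans hc.symm)
    have hcount : row0Count n lam1 (s ∘ (permOf n lam1 S₀)) =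
        (Finset.univ.filter fun i : Fin n => 2 * lam1 ≤ (i : ℕ) ∧ s i = 1).card := by
      rw [row0Count]
      congr 1
      apply Finset.filter_congr
      intro i _
      by_cases hi : (i : ℕ) < 2 * lam1
      · simp only [Function.comp]
        constructor
        · rintro ⟨hr, hv⟩
          exfalso
          simp only [rowLabel, if_pos hi] at hr
          have hjlt : (i : ℕ) / 2 < lam1 := by omega
          have hieq : i = (⟨2 * ((i : ℕ) / 2), by omega⟩ : Fin n) := Fin.ext (by simp; omega)
          rw [hieq, permOf_even n lam1 S₀ h2 ⟨(i : ℕ) / 2, hjlt⟩ ⟨2 * ((i : ℕ) / 2), by omega⟩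
            ⟨2 * ((i : ℕ) / 2) + 1, by omega⟩ rfl rfl] at hv
          by_cases hjS : (⟨(i : ℕ) / 2, hjlt⟩ : Fin lam1) ∈ S₀
          · rw [if_pos hjS] at hv
            have hE1 := (hmemS₀ _).mp hjS
            exact hgood ⟨(i : ℕ) / 2, hjlt⟩ (hE1.trans hv.symm)
          · rw [if_neg hjS] at hv
            exact hjS ((hmemS₀ _).mpr hv)
        · rintro ⟨hr, -⟩; omega
      · simp only [Function.comp]
        rw [permOf_high n lam1 S₀ i (by omega)]
        simp only [rowLabel, if_neg hi]
        constructor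
        · rintro ⟨-, hv⟩; exact ⟨by omega, hv⟩
        · rintro ⟨-, hv⟩; exact ⟨trivial, hv⟩
    have hind : (if inT n lam1 q (s ∘ (permOf n lam1 S₀)) then (1 : ℂ) else 0) =
        (if (Finset.univ.filter fun i : Fin n =>
          2 * lam1 ≤ (i : ℕ) ∧ s i = 1).card = q then 1 else 0) := by
      have : inT n lam1 q (s ∘ (permOf n lam1 S₀)) ↔
          (Finset.univ.filter fun i : Fin n => 2 * lam1 ≤ (i : ℕ) ∧ s i = 1).card = q := by
        rw [inT, hcount]
        constructor
        · rintro ⟨-, h⟩; exact h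
        · intro h; exact ⟨hpart1, h⟩
      by_cases hc : inT n lam1 q (s ∘ (permOf n lam1 S₀))
      · rw [if_pos hc, if_pos (this.mp hc)]
      · rw [if_neg hc, if_neg (fun hcc => hc (this.mpr hcc))]
    -- evaluate the product of singlet amplitudes
    have hprod : (∏ j : Fin lam1,
        sing (s ⟨2 * (j : ℕ), by have := j.2; omega⟩)
          (s ⟨2 * (j : ℕ) + 1, by have := j.2; omega⟩)) =
        (-1 : ℂ) ^ S₀.card * (((Real.sqrt 2 : ℝ) : ℂ)⁻¹) ^ lam1 := by
      have hstep : ∀ j : Fin lam1,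
          sing (s ⟨2 * (j : ℕ), by have := j.2; omega⟩)
            (s ⟨2 * (j : ℕ) + 1, by have := j.2; omega⟩) =
          (-1 : ℂ) ^ (if j ∈ S₀ then 1 else 0) * ((Real.sqrt 2 : ℝ) : ℂ)⁻¹ := by
        intro j
        by_cases hjS : j ∈ S₀
        · have hE := (hmemS₀ j).mp hjS
          have hO : s ⟨2 * (j : ℕ) + 1, by have := j.2; omega⟩ = 0 := by
            apply fin2_ne_one
            intro hc
            exact hgood j (hE.trans hc.symm)
          rw [if_pos hjS, hE, hO]
          simp [sing]
        · have hE : s ⟨2 * (j : ℕ), by have := j.2; omega⟩ = 0 :=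
            fin2_ne_one _ (fun hc => hjS ((hmemS₀ j).mpr hc))
          have hO : s ⟨2 * (j : ℕ) + 1, by have := j.2; omega⟩ = 1 := by
            apply fin2_ne_zero
            intro hc
            exact hgood j (hE.trans hc.symm)
          rw [if_neg hjS, hE, hO]
          simp [sing]
      rw [Finset.prod_congr rfl (fun j _ => hstep j), Finset.prod_mul_distrib,
        Finset.prod_pow_eq_pow_sum, Finset.prod_const, Finset.card_univ, Fintype.card_fin]
      congr 2
      rw [hS₀, Finset.card_filter]
      refine Finset.sum_congr rfl fun i _ => ?_
      by_cases hi : s ⟨2 * (i : ℕ), by have := i.2; omega⟩ = 1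
      · rw [if_pos hi, if_pos ((hmemS₀ i).mpr hi)]
      · rw [if_neg hi, if_neg (fun hc => hi ((hmemS₀ i).mp hc))]
    rw [targetState, hprod, ← hind]
    have hCpos : (0 : ℝ) < ((n - 2 * lam1).choose q : ℝ) := by
      have := Nat.choose_pos hq
      positivity
    have hCne : ((Real.sqrt ((n - 2 * lam1).choose q) : ℝ) : ℂ) ≠ 0 := by
      rw [Ne, Complex.ofReal_eq_zero]
      positivity
    have hs2ne := sqrt2C_ne
    field_simp
    rw [mul_assoc, ← mul_pow, mul_one_div_cancel sqrt2C_ne, one_pow, mul_one]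
  · -- some pair is 00 or 11 : both sides vanish
    push_neg at hgood
    obtain ⟨j, hj⟩ := hgood
    have hjlt := j.isLt
    have hRHS : targetState n lam1 q h2 s = 0 := by
      rw [targetState]
      rw [Finset.prod_eq_zero (Finset.mem_univ j) (sing_same _ _ hj)]
      ring
    rw [hRHS, mul_zero]
    apply Finset.sum_ninvolution
      (g := fun S => if j ∈ S then S.erase j else insert j S)
    · intro S
      have hfun : s ∘ (permOf n lam1 (if j ∈ S then S.erase j else insert j S)) =
          s ∘ (permOf n lam1 S) := by
        funext x
        simp only [Function.comp]
        by_cases hx : (x : ℕ) < 2 * lam1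
        · have hjx : (x : ℕ) / 2 < lam1 := by omega
          set j' : Fin lam1 := ⟨(x : ℕ) / 2, hjx⟩ with hj'
          set gS := if j ∈ S then S.erase j else insert j S with hgS
          by_cases hjj : j' = j
          · -- x is in the pair of j and s is constant on that pair
            have hpairval : ∀ y : Fin n, (y : ℕ) / 2 = (j : ℕ) → (y : ℕ) < 2 * lam1 →
                s y = s ⟨2 * (j : ℕ), by omega⟩ := by
              intro y hy hylt
              rcases Nat.mod_two_eq_zero_or_one (y : ℕ) with hp | hp
              · congr 1; apply Fin.ext; show (y : ℕ) = 2 * (j : ℕ); omega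
              · have : y = (⟨2 * (j : ℕ) + 1, by omega⟩ : Fin n) :=
                  Fin.ext (by show (y : ℕ) = 2 * (j : ℕ) + 1; omega)
                rw [this, ← hj]
            have hjv : ((j' : Fin lam1) : ℕ) = (j : ℕ) := by rw [hjj]
            obtain ⟨hd1, hl1, -⟩ := permOf_val n lam1 gS x
            obtain ⟨hd2, hl2, -⟩ := permOf_val n lam1 S x
            rw [hpairval _ (by rw [hd1]; simpa [hj'] using congrArg Fin.val hjj) (hl1 hx),
              hpairval _ (by rw [hd2]; simpa [hj'] using congrArg Fin.val hjj) (hl2 hx)]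
          · -- membership of j' is the same in both sets
            have hmemiff : j' ∈ gS ↔ j' ∈ S := by
              rw [hgS]
              by_cases hjS : j ∈ S
              · rw [if_pos hjS, Finset.mem_erase]
                exact ⟨fun h => h.2, fun h => ⟨hjj, h⟩⟩
              · rw [if_neg hjS, Finset.mem_insert]
                exact ⟨fun h => h.resolve_left hjj, Or.inr⟩
            have : flipFun n lam1 gS x = flipFun n lam1 S x := by
              unfold flipFun
              rw [dif_pos ⟨hx, h2⟩, dif_pos ⟨hx, h2⟩]
              by_cases hm : (⟨(x : ℕ) / 2, by omega⟩ : Fin lam1) ∈ S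
              · rw [if_pos hm, if_pos (hmemiff.mpr hm)]
              · rw [if_neg hm, if_neg (fun hc => hm (hmemiff.mp hc))]
            show s (flipFun n lam1 gS x) = s (flipFun n lam1 S x)
            rw [this]
        · rw [permOf_high n lam1 _ x (by omega), permOf_high n lam1 S x (by omega)]
      rw [hfun]
      have hcard : ((if j ∈ S then S.erase j else insert j S).card + 1 = S.card) ∨
          (S.card + 1 = (if j ∈ S then S.erase j else insert j S).card) := by
        by_cases hjS : j ∈ S
        · left; rw [if_pos hjS, Finset.card_erase_of_mem hjS]
          have := Finset.card_pos.mpr ⟨j, hjS⟩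
          omega
        · right; rw [if_neg hjS, Finset.card_insert_of_notMem hjS]
      have hsign : (-1 : ℂ) ^ S.card +
          (-1 : ℂ) ^ (if j ∈ S then S.erase j else insert j S).card = 0 := by
        rcases hcard with h | h
        · rw [← h, pow_succ]; ring
        · rw [← h, pow_succ]; ring
      rw [← add_mul, hsign, zero_mul]
    · intro S _
      by_cases hjS : j ∈ S
      · rw [if_pos hjS]
        intro h
        have : j ∈ S.erase j := h.symm ▸ hjS
        exact absurd this (Finset.notMem_erase j S)
      · rw [if_neg hjS]
        intro h
        exact hjS (h ▸ Finset.mem_insert_self j S)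
    · intro S; exact Finset.mem_univ _
    · intro S
      by_cases hjS : j ∈ S
      · rw [if_pos hjS, if_neg (Finset.notMem_erase j S), Finset.insert_erase hjS]
      · rw [if_neg hjS, if_pos (Finset.mem_insert_self j S), Finset.erase_insert hjS]

/-- Applying the Young symmetrizer of the column-standard two-row tableau of
shape `λ = (λ₀, λ₁)` to `|x_q⟩ = |01⟩^⊗λ₁ ⊗ |0⟩^⊗(n-2λ₁-q) ⊗ |1⟩^⊗q` yields, up
to normalization, the state `|Ψ⟩^⊗λ₁ ⊗ |Σ_{n-2λ₁}^q⟩ / √C(n-2λ₁, q)`. -/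
theorem young_symmetrizer_image (n lam0 lam1 q : ℕ) (h1 : lam1 ≤ lam0)
    (hn : lam0 + lam1 = n) (hq : q ≤ n - 2 * lam1) :
    ∃ c : ℂ, c ≠ 0 ∧
      (colSym n lam1 * rowSym n lam1).mulVec (basisVec n (xqBits n lam1 q)) =
        c • targetState n lam1 q (by omega) := by
  have h2 : 2 * lam1 ≤ n := by omega
  set b0 := xqBits n lam1 q with hb0
  set M := Ncount n lam1 b0 b0 with hM
  have hMpos : 0 < M := Ncount_pos n lam1 q
  have hCpos : 0 < (n - 2 * lam1).choose q := Nat.choose_pos hq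
  refine ⟨(M : ℂ) * ((Real.sqrt 2 : ℝ) : ℂ) ^ lam1 *
    ((Real.sqrt ((n - 2 * lam1).choose q) : ℝ) : ℂ), ?_, ?_⟩
  · apply mul_ne_zero
    apply mul_ne_zero
    · exact Nat.cast_ne_zero.mpr hMpos.ne'
    · exact pow_ne_zero _ sqrt2C_ne
    · rw [Ne, Complex.ofReal_eq_zero]
      have : (0 : ℝ) < ((n - 2 * lam1).choose q : ℝ) := by positivity
      positivity
  · funext s
    have h0 : (colSym n lam1 * rowSym n lam1).mulVec (basisVec n b0) =
        (colSym n lam1).mulVec ((rowSym n lam1).mulVec (basisVec n b0)) :=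
      (Matrix.mulVec_mulVec _ _ _).symm
    rw [h0, colSym_mulVec]
    have hre : ∀ π : Equiv.Perm (Fin n),
        ((rowSym n lam1).mulVec (basisVec n b0)) (s ∘ π) =
          (if inT n lam1 q (s ∘ π) then (M : ℂ) else 0) := by
      intro π
      rw [rowSym_mulVec_basis]
      by_cases hT : inT n lam1 q (s ∘ π)
      · rw [if_pos hT, hM, hb0]
        exact_mod_cast Ncount_const n lam1 q h2 hq _ hT
      · rw [if_neg hT, hb0]
        exact_mod_cast Ncount_eq_zero n lam1 q h2 hq _ hT
    simp only [hre]
    rw [colPres_sum n lam1 h2]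
    have hterm : ∀ S : Finset (Fin lam1),
        ((Equiv.Perm.sign (permOf n lam1 S) : ℤ) : ℂ) *
          (if inT n lam1 q (s ∘ (permOf n lam1 S)) then (M : ℂ) else 0) =
        (M : ℂ) * ((-1 : ℂ) ^ S.card *
          (if inT n lam1 q (s ∘ (permOf n lam1 S)) then 1 else 0)) := by
      intro S
      rw [sign_permOf n lam1 h2 S]
      push_cast
      by_cases hT : inT n lam1 q (s ∘ (permOf n lam1 S))
      · rw [if_pos hT, if_pos hT]; ring
      · rw [if_neg hT, if_neg hT]; ring
    rw [Finset.sum_congr rfl (fun S _ => hterm S), ← Finset.mul_sum,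
      key_sum n lam1 q h2 hq s]
    simp only [Pi.smul_apply, smul_eq_mul]
    ring
end
end
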